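/- arXiv:1908.00563 — 2 statements merged into one kernel-verified Lean document; each statement's English description precedes it below -/
import Mathlib

section
/- Counting inequality in the proof of the Adversarial Permutation Lemma (Lemma 3.2): let c = 1/(2 + 4/Real.logb 2 10) ≈ 0.3121, fix a real ε with 0 < ε < 1, and let k : ℕ → ℕ satisfy k(b) ≥ 1 for all b and (fun b => (k(b) : ℝ)) = o(fun b => (b : ℝ)) as b → ∞. For b ∈ ℕ define the real number t(b) = (1 − ε)·c·b·Real.logb (10·k(b)) b. Then for all sufficiently large b, (2 : ℝ)^(4·t(b)) · (2·t(b))^(k(b)) · (10·k(b) : ℝ)^(2·t(b)) < (b! : ℝ), where all powers are real powers. -/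
open Filter

lemma fact_lower (n : ℕ) : ((n : ℝ) / Real.exp 1) ^ n ≤ (Nat.factorial n : ℝ) := by
  induction n with
  | zero => simp
  | succ n ih =>
    have he : (0:ℝ) < Real.exp 1 := Real.exp_pos 1
    have key : ((n:ℝ)+1) ^ n ≤ Real.exp 1 * (n:ℝ) ^ n := by
      rcases Nat.eq_zero_or_pos n with h | h
      · simp [h, Real.one_le_exp]
      · have hn : (0:ℝ) < n := by exact_mod_cast h
        have h1 : (n:ℝ) + 1 ≤ n * Real.exp (1/n) := by
          have h2 := mul_le_mul_of_nonneg_left (Real.add_one_le_exp (1/(n:ℝ))) hn.le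
          have h3 : (n:ℝ)*(1/n+1) = n+1 := by field_simp; ring
          linarith
        calc ((n:ℝ)+1) ^ n ≤ ((n:ℝ) * Real.exp (1/n)) ^ n := by
              apply pow_le_pow_left₀ (by positivity) h1
          _ = (n:ℝ)^n * Real.exp (1/n) ^ n := mul_pow _ _ _
          _ = (n:ℝ)^n * Real.exp 1 := by
              rw [← Real.exp_nat_mul]
              congr 1
              field_simp
          _ = Real.exp 1 * (n:ℝ)^n := by ring
    have step : (((n:ℝ)+1) / Real.exp 1) ^ (n+1) ≤ ((n:ℝ)+1) * ((n:ℝ)/Real.exp 1)^n := by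
      rw [div_pow, div_pow, div_le_iff₀ (by positivity)]
      have hrw : ((n:ℝ)+1)^(n+1) = ((n:ℝ)+1) * ((n:ℝ)+1)^n := by ring
      rw [hrw]
      have h2 : ((n:ℝ)+1) * ((n:ℝ)+1)^n ≤ ((n:ℝ)+1) * (Real.exp 1 * (n:ℝ)^n) :=
        mul_le_mul_of_nonneg_left key (by positivity)
      calc ((n:ℝ)+1) * ((n:ℝ)+1)^n ≤ ((n:ℝ)+1) * (Real.exp 1 * (n:ℝ)^n) := h2
        _ = ((n:ℝ)+1) * ((n:ℝ)^n / Real.exp 1 ^ n) * Real.exp 1 ^ (n+1) := by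
            field_simp; ring
    calc (((n+1 : ℕ):ℝ) / Real.exp 1) ^ (n+1) = (((n:ℝ)+1) / Real.exp 1) ^ (n+1) := by push_cast; ring_nf
      _ ≤ ((n:ℝ)+1) * ((n:ℝ)/Real.exp 1)^n := step
      _ ≤ ((n:ℝ)+1) * (Nat.factorial n : ℝ) :=
          mul_le_mul_of_nonneg_left ih (by positivity)
      _ = (Nat.factorial (n+1) : ℝ) := by
          rw [Nat.factorial_succ]; push_cast; ring

/-- Counting inequality in the proof of the Adversarial Permutation Lemma
(Lemma 3.2): with `c = 1/(2 + 4/log₂ 10)`, `0 < ε < 1`, `k(b) ≥ 1` and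
`k(b) = o(b)`, setting `t(b) = (1−ε)·c·b·log_{10·k(b)} b`, we have
`2^{4t} · (2t)^{k} · (10k)^{2t} < b!` for all sufficiently large `b`,
where all powers are real powers. -/
theorem adversarial_counting (ε : ℝ) (hε : 0 < ε) (hε1 : ε < 1)
    (k : ℕ → ℕ) (hk : ∀ b, 1 ≤ k b)
    (hko : (fun b => (k b : ℝ)) =o[atTop] (fun b => (b : ℝ)))
    (c : ℝ) (hc : c = 1 / (2 + 4 / Real.logb 2 10))
    (t : ℕ → ℝ)
    (ht : ∀ b : ℕ, t b = (1 - ε) * c * b * Real.logb (10 * k b) b) :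
    ∀ᶠ b : ℕ in atTop,
      (2 : ℝ) ^ (4 * t b) * (2 * t b) ^ ((k b : ℝ)) *
          ((10 * k b : ℕ) : ℝ) ^ (2 * t b) < (Nat.factorial b : ℝ) := by
  -- basic constants
  have hlog2 : (0:ℝ) < Real.log 2 := Real.log_pos (by norm_num)
  have hlog10 : (1:ℝ) < Real.log 10 := by
    rw [Real.lt_log_iff_exp_lt (by norm_num)]
    have := Real.exp_one_lt_d9
    linarith
  have hqnn : (0:ℝ) ≤ 4 * Real.log 2 / Real.log 10 :=
    div_nonneg (by linarith) (by linarith)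
  have hDpos : (0:ℝ) < 2 + 4 * Real.log 2 / Real.log 10 := by linarith
  have hcD : c = 1 / (2 + 4 * Real.log 2 / Real.log 10) := by
    rw [hc, Real.logb]
    congr 1
    rw [div_div_eq_mul_div]
  have hcpos : 0 < c := by rw [hcD]; exact one_div_pos.mpr hDpos
  have hchalf : c ≤ 1/2 := by
    rw [hcD]
    exact one_div_le_one_div_of_le (by norm_num) (by linarith)
  have hcmul : c * (2 + 4 * Real.log 2 / Real.log 10) = 1 := by
    rw [hcD]; field_simp
  -- eventually conditions
  have hlogev : ∀ᶠ b : ℕ in atTop, 2/ε < Real.log b :=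
    (Real.tendsto_log_atTop.comp tendsto_natCast_atTop_atTop).eventually
      (eventually_gt_atTop (2/ε))
  filter_upwards [eventually_ge_atTop 2, hko.bound (by positivity : (0:ℝ) < ε/4),
    hlogev] with b hb2 hkb hεL
  have hk1 : 1 ≤ k b := hk b
  have hkR : (1:ℝ) ≤ (k b : ℝ) := by exact_mod_cast hk1
  have hbR : (2:ℝ) ≤ (b:ℝ) := by exact_mod_cast hb2
  have hbpos : (0:ℝ) < (b:ℝ) := by linarith
  have h1ε : 0 < 1 - ε := by linarith
  set L : ℝ := Real.log b with hLdef
  set K : ℝ := Real.log (10 * (k b : ℝ)) with hKdef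
  have hL : 0 < L := Real.log_pos (by linarith)
  have hKge : Real.log 10 ≤ K := Real.log_le_log (by norm_num) (by nlinarith)
  have hK1 : 1 < K := lt_of_lt_of_le hlog10 hKge
  have hKpos : 0 < K := by linarith
  have hKne : K ≠ 0 := ne_of_gt hKpos
  have hLb : L ≤ (b:ℝ) := by
    have := Real.log_le_sub_one_of_pos hbpos
    linarith
  -- rewrite t b
  have htb : t b = (1-ε) * c * b * (L/K) := by
    rw [ht b, Real.logb]
  have hTpos : 0 < t b := by
    rw [htb]
    exact mul_pos (mul_pos (mul_pos h1ε hcpos) hbpos) (div_pos hL hKpos)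
  have h2tpos : 0 < 2 * t b := by linarith
  -- bound on k b
  have hkb' : (k b : ℝ) ≤ ε/4 * b := by
    simpa [Real.norm_eq_abs, abs_of_nonneg, Nat.cast_nonneg] using hkb
  -- Bound A
  have hA : 4 * t b * Real.log 2 + 2 * t b * K ≤ (1-ε) * b * L := by
    have heq : 4 * t b * Real.log 2 + 2 * t b * K
        = (1-ε) * c * b * L * (4 * Real.log 2 / K + 2) := by
      rw [htb]; field_simp
    rw [heq]
    have hquot : 4 * Real.log 2 / K + 2 ≤ 2 + 4 * Real.log 2 / Real.log 10 := by
      have : 4 * Real.log 2 / K ≤ 4 * Real.log 2 / Real.log 10 :=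
        div_le_div_of_nonneg_left (by linarith) (by linarith) hKge
      linarith
    have hApos : 0 ≤ (1-ε) * c * (b:ℝ) * L :=
      mul_nonneg (mul_nonneg (mul_nonneg h1ε.le hcpos.le) hbpos.le) hL.le
    calc (1-ε) * c * (b:ℝ) * L * (4 * Real.log 2 / K + 2)
        ≤ (1-ε) * c * (b:ℝ) * L * (2 + 4 * Real.log 2 / Real.log 10) :=
          mul_le_mul_of_nonneg_left hquot hApos
      _ = (1-ε) * (b:ℝ) * L * (c * (2 + 4 * Real.log 2 / Real.log 10)) := by ring
      _ = (1-ε) * (b:ℝ) * L := by rw [hcmul, mul_one]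
  -- Bound B
  have h2t : 2 * t b ≤ (b:ℝ)^2 := by
    have h1 : L/K ≤ L := div_le_self hL.le hK1.le
    have h2 : t b ≤ c * (b:ℝ) * L := by
      rw [htb]
      calc (1-ε) * c * (b:ℝ) * (L/K) ≤ 1 * c * (b:ℝ) * L := by
            gcongr
            · linarith
          _ = c * (b:ℝ) * L := by ring
    have h3 : c * (b:ℝ) * L ≤ 1/2 * ((b:ℝ) * L) := by
      have := mul_le_mul_of_nonneg_right hchalf
        (mul_nonneg hbpos.le hL.le : (0:ℝ) ≤ (b:ℝ) * L)
      linarith [this]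
    have h4 : (b:ℝ) * L ≤ (b:ℝ) * (b:ℝ) :=
      mul_le_mul_of_nonneg_left hLb hbpos.le
    nlinarith
  have hlog2t : Real.log (2 * t b) ≤ 2 * L := by
    have h := Real.log_le_log h2tpos h2t
    rw [Real.log_pow] at h
    push_cast at h
    linarith
  have hB : (k b : ℝ) * Real.log (2 * t b) ≤ ε/2 * b * L := by
    calc (k b : ℝ) * Real.log (2 * t b) ≤ (k b : ℝ) * (2 * L) :=
          mul_le_mul_of_nonneg_left hlog2t (by positivity)
      _ ≤ (ε/4 * b) * (2 * L) :=
          mul_le_mul_of_nonneg_right hkb' (by positivity)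
      _ = ε/2 * b * L := by ring
  -- Bound C
  have hC : (1 - ε/2) * b * L < Real.log (Nat.factorial b : ℝ) := by
    have hfl := fact_lower b
    have h1 : Real.log (((b:ℝ)/Real.exp 1)^b) ≤ Real.log (Nat.factorial b : ℝ) :=
      Real.log_le_log (by positivity) hfl
    rw [Real.log_pow, Real.log_div (by linarith) (Real.exp_ne_zero 1), Real.log_exp] at h1
    have hεL2 : 2 < L * ε := (div_lt_iff₀ hε).mp hεL
    have hb' : 0 < (b:ℝ) * (L * ε - 2) := mul_pos hbpos (by linarith)
    have key : (b:ℝ)*(L-1) - (1 - ε/2) * (b:ℝ) * L = ((b:ℝ)*(L*ε-2))/2 := by ring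
    linarith
  -- assemble
  have hcast : ((10 * k b : ℕ) : ℝ) = 10 * (k b : ℝ) := by push_cast; ring
  have h10pos : (0:ℝ) < ((10 * k b : ℕ) : ℝ) := by rw [hcast]; positivity
  have hr1 : (0:ℝ) < (2:ℝ) ^ (4 * t b) := Real.rpow_pos_of_pos (by norm_num) _
  have hr2 : (0:ℝ) < (2 * t b) ^ ((k b : ℝ)) := Real.rpow_pos_of_pos h2tpos _
  have hr3 : (0:ℝ) < ((10 * k b : ℕ) : ℝ) ^ (2 * t b) := Real.rpow_pos_of_pos h10pos _
  have hPpos : 0 < (2 : ℝ) ^ (4 * t b) * (2 * t b) ^ ((k b : ℝ)) *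
      ((10 * k b : ℕ) : ℝ) ^ (2 * t b) := mul_pos (mul_pos hr1 hr2) hr3
  have hlogP : Real.log ((2 : ℝ) ^ (4 * t b) * (2 * t b) ^ ((k b : ℝ)) *
      ((10 * k b : ℕ) : ℝ) ^ (2 * t b))
      = 4 * t b * Real.log 2 + (k b : ℝ) * Real.log (2 * t b) + 2 * t b * K := by
    rw [Real.log_mul (mul_pos hr1 hr2).ne' hr3.ne', Real.log_mul hr1.ne' hr2.ne',
      Real.log_rpow (by norm_num), Real.log_rpow h2tpos, Real.log_rpow h10pos,
      hcast]
  have hfinal : Real.log ((2 : ℝ) ^ (4 * t b) * (2 * t b) ^ ((k b : ℝ)) *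
      ((10 * k b : ℕ) : ℝ) ^ (2 * t b)) < Real.log (Nat.factorial b : ℝ) := by
    rw [hlogP]
    have heq2 : (1-ε) * (b:ℝ) * L + ε/2 * (b:ℝ) * L = (1 - ε/2) * (b:ℝ) * L := by ring
    linarith [add_le_add hA hB]
  exact (Real.log_lt_log_iff hPpos (by positivity)).mp hfinal
end

section
/- Online lower bound with persistent fingers (Lemma 3.7, made precise): let G be a connected simple graph on a finite vertex set V of cardinality n in which every vertex has degree at most 3, and let F ⊆ V be a finite set of k ≥ 1 vertices (the fingers). Then at least n/2 vertices u ∈ V satisfy: for every f ∈ F, the graph distance satisfies (G.dist f u : ℝ) ≥ Real.logb 2 n − Real.logb 2 k − Real.logb 2 3 − 1. -/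
open SimpleGraph

lemma pred_lemma {V : Type*} {G : SimpleGraph V} (hconn : G.Connected)
    {f u : V} {d : ℕ} (h : G.dist f u = d + 1) :
    ∃ v, G.Adj v u ∧ G.dist f v = d := by
  obtain ⟨p, hp⟩ := hconn.exists_walk_length_eq_dist f u
  cases p with
  | nil => simp at h
  | cons ha q =>
    obtain ⟨x, q', h', heq⟩ := SimpleGraph.Walk.exists_cons_eq_concat ha q
    refine ⟨x, h', ?_⟩
    have hlen : q'.length = d := by
      have h2 := congrArg SimpleGraph.Walk.length heq
      rw [SimpleGraph.Walk.length_concat] at h2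
      omega
    have hle : G.dist f x ≤ d := hlen ▸ SimpleGraph.dist_le q'
    have hge : d ≤ G.dist f x := by
      have htri := hconn.dist_triangle (u := f) (v := x) (w := u)
      have hxu : G.dist x u = 1 := SimpleGraph.dist_eq_one_iff_adj.mpr h'
      omega
    omega

open Finset in
lemma sphere_bound {V : Type*} [Fintype V] {G : SimpleGraph V} [DecidableRel G.Adj]
    (hconn : G.Connected) (hdeg : ∀ v : V, G.degree v ≤ 3) (f : V) :
    ∀ d : ℕ, (univ.filter (fun u => G.dist f u = d + 1)).card ≤ 3 * 2 ^ d := by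
  classical
  intro d
  induction d with
  | zero =>
    have hsub : (univ.filter (fun u => G.dist f u = 1)) ⊆ G.neighborFinset f := by
      intro u hu
      simp only [mem_filter] at hu
      simpa using SimpleGraph.dist_eq_one_iff_adj.mp hu.2
    calc _ ≤ (G.neighborFinset f).card := card_le_card hsub
      _ ≤ 3 := hdeg f
      _ ≤ 3 * 2 ^ 0 := by norm_num
  | succ d ih =>
    have hsub : (univ.filter (fun u => G.dist f u = d + 2)) ⊆
        (univ.filter (fun v => G.dist f v = d + 1)).biUnion
          (fun v => (G.neighborFinset v).filter (fun u => G.dist f u = d + 2)) := by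
      intro u hu
      simp only [mem_filter] at hu
      obtain ⟨v, hadj, hv⟩ := pred_lemma hconn hu.2
      simp only [mem_biUnion, mem_filter, SimpleGraph.mem_neighborFinset]
      exact ⟨v, ⟨mem_univ v, hv⟩, hadj, hu.2⟩
    have hfib : ∀ v ∈ (univ.filter (fun v => G.dist f v = d + 1)),
        ((G.neighborFinset v).filter (fun u => G.dist f u = d + 2)).card ≤ 2 := by
      intro v hv
      simp only [mem_filter] at hv
      obtain ⟨w, hadj, hw⟩ := pred_lemma hconn hv.2
      have hsub2 : (G.neighborFinset v).filter (fun u => G.dist f u = d + 2) ⊆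
          (G.neighborFinset v).erase w := by
        intro u hu
        simp only [mem_filter] at hu
        refine mem_erase.mpr ⟨?_, hu.1⟩
        rintro rfl
        omega
      have hwmem : w ∈ G.neighborFinset v := by
        simpa using hadj.symm
      calc _ ≤ ((G.neighborFinset v).erase w).card := card_le_card hsub2
        _ = (G.neighborFinset v).card - 1 := card_erase_of_mem hwmem
        _ ≤ 2 := by have := hdeg v; rw [SimpleGraph.card_neighborFinset_eq_degree]; omega
    calc _ ≤ _ := card_le_card hsub
      _ ≤ ∑ v ∈ (univ.filter (fun v => G.dist f v = d + 1)),
            ((G.neighborFinset v).filter (fun u => G.dist f u = d + 2)).card :=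
          card_biUnion_le
      _ ≤ ∑ _v ∈ (univ.filter (fun v => G.dist f v = d + 1)), 2 := sum_le_sum hfib
      _ = (univ.filter (fun v => G.dist f v = d + 1)).card * 2 := by rw [sum_const, smul_eq_mul]
      _ ≤ (3 * 2 ^ d) * 2 := by exact Nat.mul_le_mul_right 2 ih
      _ = 3 * 2 ^ (d + 1) := by ring

open Finset in
lemma ball_bound {V : Type*} [Fintype V] {G : SimpleGraph V} [DecidableRel G.Adj]
    (hconn : G.Connected) (hdeg : ∀ v : V, G.degree v ≤ 3) (f : V) :
    ∀ r : ℕ, (univ.filter (fun u => G.dist f u ≤ r)).card ≤ 3 * 2 ^ r := by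
  classical
  intro r
  induction r with
  | zero =>
    have hsub : (univ.filter (fun u => G.dist f u ≤ 0)) ⊆ {f} := by
      intro u hu
      simp only [mem_filter, Nat.le_zero] at hu
      have := hconn.dist_eq_zero_iff.mp hu.2
      simp [this]
    calc _ ≤ ({f} : Finset V).card := card_le_card hsub
      _ ≤ 3 * 2 ^ 0 := by simp
  | succ r ih =>
    have hsub : (univ.filter (fun u => G.dist f u ≤ r + 1)) ⊆
        (univ.filter (fun u => G.dist f u ≤ r)) ∪
        (univ.filter (fun u => G.dist f u = r + 1)) := by
      intro u hu
      simp only [mem_filter, mem_union, mem_univ, true_and] at hu ⊢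
      omega
    calc _ ≤ _ := card_le_card hsub
      _ ≤ _ + _ := card_union_le _ _
      _ ≤ 3 * 2 ^ r + 3 * 2 ^ r := Nat.add_le_add ih (sphere_bound hconn hdeg f r)
      _ = 3 * 2 ^ (r + 1) := by ring

/-- Online lower bound with persistent fingers (Lemma 3.7, made precise):
in a connected simple graph on `n` vertices with maximum degree at most 3,
for any set `F` of `k ≥ 1` vertices (the fingers), at least `n/2` vertices
`u` have distance at least `log₂ n − log₂ k − log₂ 3 − 1` from every finger. -/
theorem persistent_fingers_lower_bound {V : Type*} [Fintype V]
    (G : SimpleGraph V) [DecidableRel G.Adj]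
    (hconn : G.Connected) (hdeg : ∀ v : V, G.degree v ≤ 3)
    (F : Finset V) (hF : 1 ≤ F.card) :
    (Fintype.card V : ℝ) / 2 ≤
      ({u : V | ∀ f ∈ F,
          Real.logb 2 (Fintype.card V) - Real.logb 2 F.card - Real.logb 2 3 - 1
            ≤ (G.dist f u : ℝ)} : Set V).ncard := by
  classical
  set n := Fintype.card V with hn
  set k := F.card with hk
  set D : ℝ := Real.logb 2 n - Real.logb 2 k - Real.logb 2 3 - 1 with hD
  have hset : ({u : V | ∀ f ∈ F, D ≤ (G.dist f u : ℝ)} : Set V) =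
      ↑(Finset.univ.filter (fun u => ∀ f ∈ F, D ≤ (G.dist f u : ℝ))) := by
    ext u; simp
  rw [hset, Set.ncard_coe_finset]
  by_cases hD0 : D ≤ 0
  · have heq : Finset.univ.filter (fun u => ∀ f ∈ F, D ≤ (G.dist f u : ℝ)) =
        Finset.univ := by
      refine Finset.filter_true_of_mem ?_
      intro u _ f _
      exact hD0.trans (Nat.cast_nonneg _)
    rw [heq, Finset.card_univ, ← hn]
    have : (0:ℝ) ≤ (n:ℝ) := Nat.cast_nonneg _
    linarith
  push_neg at hD0
  have hV : Nonempty V := hconn.nonempty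
  have hnpos : 0 < n := Fintype.card_pos
  have hnR : (0:ℝ) < (n:ℝ) := by exact_mod_cast hnpos
  have hkR : (1:ℝ) ≤ (k:ℝ) := by exact_mod_cast hF
  have hceil : 1 ≤ ⌈D⌉₊ := Nat.one_le_ceil_iff.mpr hD0
  set r : ℕ := ⌈D⌉₊ - 1 with hr
  -- bad vertices
  have hbad : Finset.univ.filter (fun u => ¬ ∀ f ∈ F, D ≤ (G.dist f u : ℝ)) ⊆
      F.biUnion (fun f => Finset.univ.filter (fun u => G.dist f u ≤ r)) := by
    intro u hu
    simp only [Finset.mem_filter, not_forall] at hu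
    obtain ⟨_, f, hf, hlt⟩ := hu
    push_neg at hlt
    have h1 : G.dist f u < ⌈D⌉₊ := Nat.lt_ceil.mpr hlt
    have h2 : G.dist f u ≤ r := by omega
    exact Finset.mem_biUnion.mpr ⟨f, hf, by simp [h2]⟩
  have hbadcard : (Finset.univ.filter
      (fun u => ¬ ∀ f ∈ F, D ≤ (G.dist f u : ℝ))).card ≤ k * (3 * 2 ^ r) := by
    calc _ ≤ _ := Finset.card_le_card hbad
      _ ≤ ∑ f ∈ F, (Finset.univ.filter (fun u => G.dist f u ≤ r)).card :=
          Finset.card_biUnion_le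
      _ ≤ ∑ _f ∈ F, 3 * 2 ^ r :=
          Finset.sum_le_sum (fun f _ => ball_bound hconn hdeg f r)
      _ = k * (3 * 2 ^ r) := by rw [Finset.sum_const, smul_eq_mul, hk]
  -- real arithmetic
  have hrD : (r : ℝ) ≤ D := by
    have h1 : (⌈D⌉₊ : ℝ) < D + 1 := Nat.ceil_lt_add_one hD0.le
    have h2 : (r : ℝ) = (⌈D⌉₊ : ℝ) - 1 := by
      rw [hr, Nat.cast_sub hceil, Nat.cast_one]
    linarith
  have h2D : (2:ℝ) ^ D = (n:ℝ) / ((k:ℝ) * 3 * 2) := by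
    rw [hD, Real.rpow_sub two_pos, Real.rpow_sub two_pos, Real.rpow_sub two_pos,
      Real.rpow_logb two_pos (by norm_num) hnR,
      Real.rpow_logb two_pos (by norm_num) (by linarith : (0:ℝ) < (k:ℝ)),
      Real.rpow_logb two_pos (by norm_num) (by norm_num : (0:ℝ) < (3:ℝ)),
      Real.rpow_one]
    ring
  have hpow : ((2:ℝ)) ^ r ≤ (2:ℝ) ^ D := by
    rw [← Real.rpow_natCast 2 r]
    exact Real.rpow_le_rpow_of_exponent_le one_le_two hrD
  have hkey : ((k * (3 * 2 ^ r) : ℕ) : ℝ) ≤ (n:ℝ) / 2 := by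
    push_cast
    have hkpos : (0:ℝ) < (k:ℝ) := by linarith
    have : (k:ℝ) * (3 * (2:ℝ) ^ D) = (n:ℝ) / 2 := by
      rw [h2D]; field_simp
    nlinarith [hpow, hkpos]
  -- combine
  have hsplit := Finset.card_filter_add_card_filter_not
    (s := (Finset.univ : Finset V)) (p := fun u => ∀ f ∈ F, D ≤ (G.dist f u : ℝ))
  rw [Finset.card_univ, ← hn] at hsplit
  have hbadR : ((Finset.univ.filter
      (fun u => ¬ ∀ f ∈ F, D ≤ (G.dist f u : ℝ))).card : ℝ) ≤ (n:ℝ) / 2 :=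
    le_trans (by exact_mod_cast hbadcard) hkey
  have hsplitR : ((Finset.univ.filter (fun u => ∀ f ∈ F, D ≤ (G.dist f u : ℝ))).card : ℝ)
      + ((Finset.univ.filter (fun u => ¬ ∀ f ∈ F, D ≤ (G.dist f u : ℝ))).card : ℝ)
      = (n:ℝ) := by exact_mod_cast hsplit
  linarith
end
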